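/- (Solutions of the VIP are generalized Nash equilibria.) Let N be a finite set of players, 𝔛 ⊆ ℝⁿ = Π_ν ℝ^{n_ν} a nonempty set, and for each ν let θ_ν : ℝ^{n_ν} × ℝ^{−n_ν} → ℝ be upper pseudocontinuous in its own player's variable. Define D_ν(x) = conv(𝒩^<_{θ_ν}(x^ν, x^{−ν}) ∩ S_ν[0,1]) where S_ν[0,1] is the unit sphere in ℝ^{n_ν} and 𝒩^<_{θ_ν}(x^ν,x^{−ν}) := N_{{z : θ_ν(z,x^{−ν}) < θ_ν(x^ν,x^{−ν})}}(x^ν), and T(x) := Π_ν D_ν(x). If x ∈ 𝔛 and there exists w₀ ∈ T(x) with ⟨w₀, y − x⟩ ≥ 0 for all y ∈ 𝔛, then x is a generalized Nash equilibrium: for every ν and every z^ν with (z^ν, x^{−ν}) ∈ 𝔛, θ_ν(x^ν, x^{−ν}) ≤ θ_ν(z^ν, x^{−ν}). -/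

import Mathlib

/-- Solutions of the variational inequality associated to `T(x) = Π_ν D_ν(x)`, where
`D_ν(x) = conv(𝒩^<_{θ_ν}(x) ∩ S_ν[0,1])`, are generalized Nash equilibria of the jointly
convex GNEP, provided each loss function is upper pseudocontinuous in its own variable. -/
theorem vip_solution_is_gne {N : Type*} [Fintype N] [DecidableEq N] (n : N → ℕ)
    (𝔛 : Set ((ν : N) → EuclideanSpace ℝ (Fin (n ν)))) (h𝔛 : 𝔛.Nonempty)
    (θ : N → ((ν : N) → EuclideanSpace ℝ (Fin (n ν))) → ℝ)
    (hupc : ∀ (ν : N) (x : (ν : N) → EuclideanSpace ℝ (Fin (n ν)))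
      (u z : EuclideanSpace ℝ (Fin (n ν))),
      θ ν (Function.update x ν z) > θ ν (Function.update x ν u) →
      ∃ V ∈ nhds u, ∀ u' ∈ V, θ ν (Function.update x ν z) > θ ν (Function.update x ν u'))
    (x : (ν : N) → EuclideanSpace ℝ (Fin (n ν))) (hx : x ∈ 𝔛)
    (w₀ : (ν : N) → EuclideanSpace ℝ (Fin (n ν)))
    (hw₀ : ∀ ν : N, w₀ ν ∈ convexHull ℝ
      ({v : EuclideanSpace ℝ (Fin (n ν)) |
          ∀ z, θ ν (Function.update x ν z) < θ ν x → inner ℝ v (z - x ν) ≤ (0 : ℝ)}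
        ∩ Metric.sphere (0 : EuclideanSpace ℝ (Fin (n ν))) 1))
    (hvip : ∀ y ∈ 𝔛, 0 ≤ ∑ ν : N, (inner ℝ (w₀ ν) (y ν - x ν) : ℝ)) :
    ∀ (ν : N) (z : EuclideanSpace ℝ (Fin (n ν))),
      Function.update x ν z ∈ 𝔛 → θ ν x ≤ θ ν (Function.update x ν z) := by
  intro ν z hz
  by_contra hlt
  push_neg at hlt
  -- upper pseudocontinuity at z with comparison point x ν
  have hcmp : θ ν (Function.update x ν (x ν)) > θ ν (Function.update x ν z) := by
    rwa [Function.update_eq_self]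
  obtain ⟨V, hV, hVlt⟩ := hupc ν x z (x ν) hcmp
  obtain ⟨ε, hε, hball⟩ := Metric.mem_nhds_iff.mp hV
  set c : ℝ := ε / 2 with hc
  have hcpos : (0:ℝ) < c := by positivity
  -- every v in the generating set satisfies ⟪v, z - x ν⟫ ≤ -c
  have hkey : ∀ v ∈ ({v : EuclideanSpace ℝ (Fin (n ν)) |
          ∀ z', θ ν (Function.update x ν z') < θ ν x → inner ℝ v (z' - x ν) ≤ (0 : ℝ)}
        ∩ Metric.sphere (0 : EuclideanSpace ℝ (Fin (n ν))) 1),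
      (inner ℝ v (z - x ν) : ℝ) ≤ -c := by
    rintro v ⟨hvN, hvS⟩
    have hnorm : ‖v‖ = 1 := by simpa using hvS
    have hmem : z + c • v ∈ Metric.ball z ε := by
      rw [Metric.mem_ball, dist_eq_norm, add_sub_cancel_left, norm_smul, hnorm, mul_one,
        Real.norm_eq_abs, abs_of_pos hcpos, hc]
      linarith
    have hlt' : θ ν (Function.update x ν (z + c • v)) < θ ν x := by
      have := hVlt _ (hball hmem)
      rwa [Function.update_eq_self] at this
    have h0 : (inner ℝ v (z + c • v - x ν) : ℝ) ≤ 0 := hvN _ hlt'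
    have hexp : (inner ℝ v (z + c • v - x ν) : ℝ)
        = inner ℝ v (z - x ν) + c * ‖v‖ ^ 2 := by
      rw [show z + c • v - x ν = (z - x ν) + c • v by abel, inner_add_right,
        real_inner_smul_right, real_inner_self_eq_norm_sq]
    rw [hexp, hnorm] at h0
    linarith
  -- convexity transfers the bound to w₀ ν
  have hconv : Convex ℝ {v : EuclideanSpace ℝ (Fin (n ν)) | (inner ℝ v (z - x ν) : ℝ) ≤ -c} := by
    have : ∀ v : EuclideanSpace ℝ (Fin (n ν)), (inner ℝ v (z - x ν) : ℝ) = inner ℝ (z - x ν) v := by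
      intro v; exact real_inner_comm (z - x ν) v
    simp only [this]
    exact convex_halfSpace_le (innerSL ℝ (z - x ν)).toLinearMap.isLinear _
  have hw : (inner ℝ (w₀ ν) (z - x ν) : ℝ) ≤ -c :=
    convexHull_min hkey hconv (hw₀ ν)
  -- evaluate the VIP at y = update x ν z
  have hsum := hvip _ hz
  have hsum' : (∑ μ : N, (inner ℝ (w₀ μ) (Function.update x ν z μ - x μ) : ℝ))
      = inner ℝ (w₀ ν) (z - x ν) := by
    rw [Finset.sum_eq_single ν]
    · simp
    · intro μ _ hμ
      simp [Function.update_of_ne hμ]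
    · simp
  rw [hsum'] at hsum
  linarith
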